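/- arXiv:2102.12967 — 2 statements merged into one kernel-verified Lean document; each statement's English description precedes it below -/
import Mathlib

section
/- Simes' test is valid for independent uniform p-values: if q_1, ..., q_m are i.i.d. Uniform[0,1] with order statistics q_(1) ≤ ... ≤ q_(m), then the Simes statistic T = min_{i∈{1,...,m}} q_(i)·m/i satisfies P(T ≤ α) = α for all α ∈ [0,1], i.e., T is uniformly distributed on [0,1]. -/
open MeasureTheory ProbabilityTheory
open scoped ENNReal NNReal
open Finset

namespace SimesAux

noncomputable def unif (t : ℝ) : Measure ℝ := volume.restrict (Set.Ico 0 t)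

noncomputable def cnt {n : ℕ} (c : ℝ) (x : Fin n → ℝ) : ℕ := (Finset.univ.filter (fun j => x j ≤ c)).card

lemma cnt_eq_sum {n : ℕ} (c : ℝ) (x : Fin n → ℝ) :
    cnt c x = ∑ j : Fin n, if x j ≤ c then 1 else 0 := by
  rw [cnt, Finset.card_filter]

lemma measurable_cnt {n : ℕ} (c : ℝ) : Measurable (fun x : Fin n → ℝ => cnt c x) := by
  simp only [cnt_eq_sum]
  exact Finset.measurable_sum _ fun j _ =>
    Measurable.ite (measurableSet_le (measurable_pi_apply j) measurable_const)
      measurable_const measurable_const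

def good (n : ℕ) (β : ℝ) : Set (Fin n → ℝ) :=
  {x | ∀ i : Fin n, cnt (((i : ℕ) + 1) * β) x ≤ (i : ℕ)}

lemma measurableSet_good (n : ℕ) (β : ℝ) : MeasurableSet (good n β) := by
  have : good n β = ⋂ i : Fin n, {x | cnt (((i : ℕ) + 1) * β) x ≤ (i : ℕ)} := by
    ext x; simp [good]
  rw [this]
  exact MeasurableSet.iInter fun i => (measurable_cnt _) measurableSet_Iic

lemma sorted_le_iff {n : ℕ} (f : Fin n → ℝ) (i : Fin n) (c : ℝ) :
    f (Tuple.sort f i) ≤ c ↔ (i : ℕ) + 1 ≤ cnt c f := by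
  set σ := Tuple.sort f with hσ
  have hmono : Monotone (f ∘ σ) := Tuple.monotone_sort f
  constructor
  · intro h
    have hsub : (Finset.Iic i).image σ ⊆ Finset.univ.filter (fun j => f j ≤ c) := by
      intro j hj
      simp only [Finset.mem_image, Finset.mem_Iic] at hj
      obtain ⟨k, hk, rfl⟩ := hj
      simp only [Finset.mem_filter, Finset.mem_univ, true_and]
      exact le_trans (hmono hk) h
    have := Finset.card_le_card hsub
    rwa [Finset.card_image_of_injective _ σ.injective, Fin.card_Iic] at this
  · intro h
    by_contra hlt
    push_neg at hlt
    have hsub : Finset.univ.filter (fun j => f j ≤ c) ⊆ (Finset.Iio i).image σ := by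
      intro j hj
      simp only [Finset.mem_filter, Finset.mem_univ, true_and] at hj
      have hji : σ.symm j < i := by
        by_contra hge
        push_neg at hge
        have : f (σ i) ≤ f (σ (σ.symm j)) := hmono hge
        rw [Equiv.apply_symm_apply] at this
        exact absurd (le_trans this hj) (not_le.mpr hlt)
      exact Finset.mem_image.mpr ⟨σ.symm j, Finset.mem_Iio.mpr hji, Equiv.apply_symm_apply σ j⟩
    have := Finset.card_le_card hsub
    rw [Finset.card_image_of_injective _ σ.injective, Fin.card_Iio] at this
    simp only [cnt] at h
    omega

instance unif_finite (t : ℝ) : IsFiniteMeasure (unif t) := by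
  constructor
  rw [unif, Measure.restrict_apply_univ, Real.volume_Ico]
  exact ENNReal.ofReal_lt_top

instance unif_sigma (t : ℝ) : SigmaFinite (unif t) := inferInstance

lemma unif_one_prob : IsProbabilityMeasure (unif 1) := by
  constructor
  rw [unif, Measure.restrict_apply_univ, Real.volume_Ico]
  simp

lemma unif_singleton (t s : ℝ) : unif t {s} = 0 :=
  le_antisymm (le_trans (Measure.restrict_apply_le _ _) (by simp)) zero_le

lemma pi_restrict_box {n : ℕ} {t s : ℝ} (hst : s ≤ t) :
    (Measure.pi fun _ : Fin n => unif t).restrict (Set.pi Set.univ fun _ => Set.Iio s)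
      = Measure.pi fun _ : Fin n => unif s := by
  refine (Measure.pi_eq fun s' hs' => ?_).symm
  rw [Measure.restrict_apply (MeasurableSet.univ_pi hs'), ← Set.pi_inter_distrib,
    Measure.pi_pi]
  refine Finset.prod_congr rfl fun i _ => ?_
  rw [unif, unif, Measure.restrict_apply (hs' i), Measure.restrict_apply ((hs' i).inter measurableSet_Iio)]
  congr 1
  rw [Set.inter_assoc]
  congr 1
  ext x
  simp only [Set.mem_inter_iff, Set.mem_Iio, Set.mem_Ico]
  constructor
  · rintro ⟨h1, h2, h3⟩; exact ⟨h2, h1⟩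
  · rintro ⟨h1, h2⟩; exact ⟨h2, h1, lt_of_lt_of_le h2 hst⟩

lemma pi_unif_box {n : ℕ} {t s : ℝ} (hst : s ≤ t) {A : Set (Fin n → ℝ)}
    (hA : MeasurableSet A) :
    Measure.pi (fun _ : Fin n => unif t) (A ∩ {x | ∀ k, x k < s})
      = Measure.pi (fun _ : Fin n => unif s) A := by
  have hbox : {x : Fin n → ℝ | ∀ k, x k < s} = Set.pi Set.univ fun _ => Set.Iio s := by
    ext x; simp [Set.mem_pi]
  rw [hbox, ← Measure.restrict_apply hA, pi_restrict_box hst]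

lemma ties_null {n : ℕ} (t : ℝ) (j k : Fin (n + 1)) (hjk : j ≠ k) :
    Measure.pi (fun _ : Fin (n + 1) => unif t) {x | x j = x k} = 0 := by
  obtain ⟨k', hk'⟩ := Fin.exists_succAbove_eq (Ne.symm hjk)
  have hmp := measurePreserving_piFinSuccAbove (fun _ : Fin (n + 1) => unif t) j
  set e := MeasurableEquiv.piFinSuccAbove (fun _ : Fin (n + 1) => ℝ) j
  have hBm : MeasurableSet {p : ℝ × (Fin n → ℝ) | p.2 k' = p.1} :=
    measurableSet_eq_fun (measurable_snd.eval) measurable_fst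
  have hpre : e ⁻¹' {p : ℝ × (Fin n → ℝ) | p.2 k' = p.1} = {x | x j = x k} := by
    ext x
    simp only [Set.mem_preimage, Set.mem_setOf_eq, e, MeasurableEquiv.piFinSuccAbove_apply]
    rw [← hk']
    exact ⟨fun h => h.symm, fun h => h.symm⟩
  rw [← hpre, hmp.measure_preimage hBm.nullMeasurableSet]
  rw [Measure.prod_apply hBm]
  have : ∀ s : ℝ, (Measure.pi fun _ : Fin n => unif t) (Prod.mk s ⁻¹' {p : ℝ × (Fin n → ℝ) | p.2 k' = p.1}) = 0 := by
    intro s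
    have hset : (Prod.mk s ⁻¹' {p : ℝ × (Fin n → ℝ) | p.2 k' = p.1})
        = Set.pi Set.univ (fun i => if i = k' then {s} else Set.univ) := by
      ext y
      simp only [Set.mem_preimage, Set.mem_setOf_eq, Set.mem_pi, Set.mem_univ, true_implies]
      constructor
      · intro h i
        by_cases hi : i = k' <;> simp [hi, h]
      · intro h
        have := h k'
        simpa using this
    rw [hset, Measure.pi_pi]
    refine Finset.prod_eq_zero (Finset.mem_univ k') ?_
    simp [unif_singleton]
  calc ∫⁻ x, (Measure.pi fun _ : Fin n => unif t) {a | a k' = x} ∂(unif t)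
      = ∫⁻ _, 0 ∂(unif t) := lintegral_congr fun x => this x
    _ = 0 := lintegral_zero
lemma cnt_le {n : ℕ} (c : ℝ) (y : Fin n → ℝ) : cnt c y ≤ n := by
  rw [cnt]
  calc (Finset.univ.filter (fun j => y j ≤ c)).card ≤ (Finset.univ : Finset (Fin n)).card :=
        Finset.card_filter_le _ _
    _ = n := by simp

lemma cnt_insertNth {n : ℕ} (c s : ℝ) (j : Fin (n + 1)) (y : Fin n → ℝ) :
    cnt c (j.insertNth s y) = (if s ≤ c then 1 else 0) + cnt c y := by
  rw [cnt_eq_sum, cnt_eq_sum, Fin.sum_univ_succAbove _ j]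
  simp [Fin.insertNth_apply_same, Fin.insertNth_apply_succAbove]

/-- The key combinatorial description of the slice. -/
lemma insertNth_mem_iff {n : ℕ} {β s : ℝ} (hβ : 0 ≤ β) (j : Fin (n + 1)) (y : Fin n → ℝ) :
    ((j.insertNth s y : Fin (n+1) → ℝ) ∈ good (n + 1) β ∧
        ∀ k, k ≠ j → (j.insertNth s y : Fin (n+1) → ℝ) k < (j.insertNth s y : Fin (n+1) → ℝ) j)
      ↔ (((n : ℝ) + 1) * β < s ∧ y ∈ good n β ∧ ∀ k, y k < s) := by
  have hub : ∀ (i : Fin (n + 1)), ((i : ℕ) : ℝ) + 1 ≤ (n : ℝ) + 1 := by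
    intro i
    have : (i : ℕ) ≤ n := Nat.lt_succ_iff.mp i.isLt
    exact_mod_cast Nat.succ_le_succ this
  constructor
  · rintro ⟨hg, hmax⟩
    have hys : ∀ k, y k < s := by
      intro k
      have := hmax (j.succAbove k) (Fin.succAbove_ne j k)
      rwa [Fin.insertNth_apply_succAbove, Fin.insertNth_apply_same] at this
    have hs : ((n : ℝ) + 1) * β < s := by
      by_contra hle
      push_neg at hle
      have hlast := hg (Fin.last n)
      have hcy : cnt (((Fin.last n : ℕ) + 1) * β) y = n := by
        rw [cnt, Finset.filter_true_of_mem, Finset.card_univ, Fintype.card_fin]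
        intro k _
        have : y k < s := hys k
        calc y k ≤ s := le_of_lt this
          _ ≤ ((n : ℝ) + 1) * β := hle
          _ = ((Fin.last n : ℕ) + 1) * β := by rw [Fin.val_last]
      rw [cnt_insertNth, hcy] at hlast
      have hsle : s ≤ ((Fin.last n : ℕ) + 1) * β := by rw [Fin.val_last]; exact_mod_cast hle
      rw [if_pos hsle] at hlast
      simp [Fin.val_last] at hlast
    refine ⟨hs, ?_, hys⟩
    intro i
    have hgi := hg (Fin.castSucc i)
    rw [cnt_insertNth] at hgi
    have hns : ¬ s ≤ (((Fin.castSucc i : Fin (n+1)) : ℕ) + 1) * β := by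
      push_neg
      calc (((Fin.castSucc i : Fin (n+1)) : ℕ) + 1 : ℝ) * β ≤ ((n : ℝ) + 1) * β :=
            mul_le_mul_of_nonneg_right (hub _) hβ
        _ < s := hs
    rw [if_neg hns, zero_add] at hgi
    simpa using hgi
  · rintro ⟨hs, hgy, hys⟩
    constructor
    · intro i
      rw [cnt_insertNth]
      have hns : ¬ s ≤ (((i : Fin (n+1)) : ℕ) + 1) * β := by
        push_neg
        calc (((i : Fin (n+1)) : ℕ) + 1 : ℝ) * β ≤ ((n : ℝ) + 1) * β :=
              mul_le_mul_of_nonneg_right (hub _) hβ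
          _ < s := hs
      rw [if_neg hns, zero_add]
      rcases lt_or_eq_of_le (Nat.lt_succ_iff.mp i.isLt) with hi | hi
      · have := hgy ⟨(i : ℕ), hi⟩
        simpa using this
      · rw [hi]
        exact (cnt_le _ _).trans (le_of_eq hi.symm) |>.trans (le_of_eq hi)
    · intro k hk
      obtain ⟨k', rfl⟩ := Fin.exists_succAbove_eq hk
      rw [Fin.insertNth_apply_succAbove, Fin.insertNth_apply_same]
      exact hys k'


lemma ofReal_nat_mul (k : ℕ) (x : ℝ) :
    (k : ℝ≥0∞) * ENNReal.ofReal x = ENNReal.ofReal ((k : ℝ) * x) := by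
  rw [← ENNReal.ofReal_natCast k, ← ENNReal.ofReal_mul (Nat.cast_nonneg _)]

lemma tail_calc (n : ℕ) (β a t : ℝ) (hβ : 0 ≤ β) (ha : a = ((n : ℝ) + 1) * β)
    (hat : a ≤ t) :
    (n + 1) • ENNReal.ofReal (∫ s in a..t, (s ^ n - (n : ℝ) * β * s ^ (n - 1)))
      = ENNReal.ofReal (t ^ (n + 1) - ((n + 1 : ℕ) : ℝ) * β * t ^ (n + 1 - 1)) := by
  rw [nsmul_eq_mul, ofReal_nat_mul]
  congr 1
  have hint : ∫ s in a..t, (s ^ n - (n : ℝ) * β * s ^ (n - 1))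
      = (t ^ (n+1) - a ^ (n+1)) / ((n : ℝ) + 1)
        - (n : ℝ) * β * ((t ^ (n - 1 + 1) - a ^ (n - 1 + 1)) / ((n - 1 : ℕ) + 1)) := by
    rw [intervalIntegral.integral_sub (intervalIntegral.intervalIntegrable_pow n)
      ((intervalIntegral.intervalIntegrable_pow (n-1)).const_mul _),
      intervalIntegral.integral_const_mul, integral_pow, integral_pow]
  rw [hint]
  have hexp : (n + 1) - 1 = n := by omega
  rw [hexp]
  rcases Nat.eq_zero_or_pos n with hn | hn
  · subst hn
    simp only [Nat.cast_zero, Nat.zero_sub, pow_one, pow_zero, Nat.cast_one]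
    rw [ha]
    ring
  · have hn1 : n - 1 + 1 = n := Nat.succ_pred_eq_of_pos hn
    rw [hn1]
    have hnn0 : ((n - 1 : ℕ) : ℝ) + 1 = (n : ℝ) := by exact_mod_cast hn1
    rw [hnn0, ha]
    have hne : (n : ℝ) ≠ 0 := Nat.cast_ne_zero.mpr (Nat.pos_iff_ne_zero.mp hn)
    have hne1 : (n : ℝ) + 1 ≠ 0 := by positivity
    push_cast
    field_simp
    ring

theorem key : ∀ (n : ℕ) (β t : ℝ), 0 ≤ β → 0 < t → (n : ℝ) * β ≤ t →
    Measure.pi (fun _ : Fin n => unif t) (good n β)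
      = ENNReal.ofReal (t ^ n - (n : ℝ) * β * t ^ (n - 1)) := by
  intro n
  induction n with
  | zero =>
    intro β t hβ ht hnt
    have hgood : good 0 β = Set.univ := by
      ext x
      simp only [good, Set.mem_setOf_eq, Set.mem_univ, iff_true]
      exact fun i => i.elim0
    rw [hgood, Measure.pi_univ]
    simp
  | succ n IH =>
    intro β t hβ ht hnt
    set P := Measure.pi (fun _ : Fin (n + 1) => unif t) with hP
    set a : ℝ := ((n : ℝ) + 1) * β with ha
    have ha0 : 0 ≤ a := mul_nonneg (by positivity) hβ
    have hat : a ≤ t := by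
      rw [ha]
      push_cast at hnt
      exact hnt
    have hnba : (n : ℝ) * β ≤ a := by
      rw [ha]
      apply mul_le_mul_of_nonneg_right _ hβ
      linarith
    set M : Fin (n + 1) → Set (Fin (n + 1) → ℝ) :=
      fun j => good (n + 1) β ∩ {x | ∀ k, k ≠ j → x k < x j} with hM
    have hMm : ∀ j, MeasurableSet (M j) := by
      intro j
      refine (measurableSet_good _ _).inter ?_
      have : {x : Fin (n+1) → ℝ | ∀ k, k ≠ j → x k < x j}
          = ⋂ k, ⋂ (_ : k ≠ j), {x | x k < x j} := by
        ext x; simp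
      rw [this]
      exact MeasurableSet.iInter fun k => MeasurableSet.iInter fun _ =>
        measurableSet_lt (measurable_pi_apply k) (measurable_pi_apply j)
    have hMj : ∀ j, P (M j)
        = ENNReal.ofReal (∫ s in a..t, (s ^ n - (n : ℝ) * β * s ^ (n - 1))) := by
      intro j
      have hmp := measurePreserving_piFinSuccAbove (fun _ : Fin (n + 1) => unif t) j
      set e := MeasurableEquiv.piFinSuccAbove (fun _ : Fin (n + 1) => ℝ) j with he
      set B : Set (ℝ × (Fin n → ℝ)) := ⇑e.symm ⁻¹' (M j) with hB
      have hBm : MeasurableSet B := e.symm.measurable (hMm j)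
      have hpre : ⇑e ⁻¹' B = M j := by
        rw [hB, ← Set.preimage_comp]
        have : ⇑e.symm ∘ ⇑e = id := by
          ext x : 1
          exact e.symm_apply_apply x
        rw [this, Set.preimage_id]
      have h1 : P (M j) = ((unif t).prod (Measure.pi fun _ : Fin n => unif t)) B := by
        rw [← hpre, hmp.measure_preimage hBm.nullMeasurableSet]
      rw [h1, Measure.prod_apply hBm]
      have hslice : ∀ s : ℝ,
          Prod.mk s ⁻¹' B = if a < s then good n β ∩ {y | ∀ k, y k < s} else ∅ := by
        intro s
        ext y
        have hey : e.symm (s, y) = j.insertNth s y := rfl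
        have hmem : (s, y) ∈ B ↔
            (((j.insertNth s y : Fin (n+1) → ℝ) ∈ good (n + 1) β) ∧
              ∀ k, k ≠ j → (j.insertNth s y : Fin (n+1) → ℝ) k
                < (j.insertNth s y : Fin (n+1) → ℝ) j) := by
          rw [hB, Set.mem_preimage, hey, hM]
          rfl
        by_cases has : a < s
        · simp only [Set.mem_preimage, if_pos has]
          rw [show ((s, y) ∈ B ↔ _) from hmem, insertNth_mem_iff hβ j y]
          rw [ha] at has
          simp only [Set.mem_inter_iff, Set.mem_setOf_eq]
          tauto
        · simp only [Set.mem_preimage, if_neg has, Set.mem_empty_iff_false, iff_false]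
          intro hc
          rw [show ((s, y) ∈ B ↔ _) from hmem, insertNth_mem_iff hβ j y] at hc
          rw [ha] at has
          exact has hc.1
      have hinner : ∀ s ∈ Set.Ico (0:ℝ) t,
          (Measure.pi fun _ : Fin n => unif t) (Prod.mk s ⁻¹' B)
            = (Set.Ioi a).indicator
                (fun s => ENNReal.ofReal (s ^ n - (n : ℝ) * β * s ^ (n - 1))) s := by
        intro s hs
        rw [hslice s]
        by_cases has : a < s
        · rw [if_pos has, pi_unif_box (le_of_lt hs.2) (measurableSet_good _ _),
            IH β s hβ (lt_of_le_of_lt ha0 has) (le_of_lt (lt_of_le_of_lt hnba has)),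
            Set.indicator_of_mem (Set.mem_Ioi.mpr has)]
        · rw [if_neg has, measure_empty,
            Set.indicator_of_notMem (fun h => has (Set.mem_Ioi.mp h))]
      have hstep : ∫⁻ s, (Measure.pi fun _ : Fin n => unif t) (Prod.mk s ⁻¹' B) ∂(unif t)
          = ∫⁻ s in Set.Ioo a t,
              ENNReal.ofReal (s ^ n - (n : ℝ) * β * s ^ (n - 1)) ∂volume := by
        have h0 : ∫⁻ s, (Measure.pi fun _ : Fin n => unif t) (Prod.mk s ⁻¹' B) ∂(unif t)
            = ∫⁻ s in Set.Ico (0:ℝ) t,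
                (Measure.pi fun _ : Fin n => unif t) (Prod.mk s ⁻¹' B) ∂volume := rfl
        rw [h0, setLIntegral_congr_fun measurableSet_Ico hinner]
        rw [lintegral_indicator measurableSet_Ioi]
        have hseteq : Set.Ioi a ∩ Set.Ico 0 t = Set.Ioo a t := by
          ext x
          simp only [Set.mem_inter_iff, Set.mem_Ioi, Set.mem_Ico, Set.mem_Ioo]
          constructor
          · rintro ⟨h1, h2, h3⟩; exact ⟨h1, h3⟩
          · rintro ⟨h1, h2⟩; exact ⟨h1, le_trans ha0 (le_of_lt h1), h2⟩
        rw [Measure.restrict_restrict measurableSet_Ioi, hseteq]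
      rw [hstep]
      have hcont : Continuous (fun s : ℝ => s ^ n - (n : ℝ) * β * s ^ (n - 1)) := by
        continuity
      have hinteg : Integrable (fun s : ℝ => s ^ n - (n : ℝ) * β * s ^ (n - 1))
          (volume.restrict (Set.Ioo a t)) :=
        (hcont.integrableOn_Icc).mono_set Set.Ioo_subset_Icc_self
      have hnn : 0 ≤ᵐ[volume.restrict (Set.Ioo a t)]
          (fun s : ℝ => s ^ n - (n : ℝ) * β * s ^ (n - 1)) := by
        refine (ae_restrict_iff' measurableSet_Ioo).mpr (ae_of_all _ fun s hs => ?_)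
        show (0:ℝ) ≤ s ^ n - (n : ℝ) * β * s ^ (n - 1)
        have hs0 : 0 < s := lt_of_le_of_lt ha0 hs.1
        rcases Nat.eq_zero_or_pos n with hn | hn
        · simp [hn]
        · have h1 : (n : ℝ) * β ≤ s := le_trans hnba (le_of_lt hs.1)
          have h2 : (n : ℝ) * β * s ^ (n - 1) ≤ s * s ^ (n - 1) :=
            mul_le_mul_of_nonneg_right h1 (le_of_lt (pow_pos hs0 _))
          have h3 : s * s ^ (n - 1) = s ^ n := by
            calc s * s ^ (n - 1) = s ^ (n - 1) * s := mul_comm _ _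
              _ = s ^ (n - 1 + 1) := (pow_succ s (n - 1)).symm
              _ = s ^ n := by congr 1; omega
          linarith
      rw [intervalIntegral.integral_of_le hat, MeasureTheory.integral_Ioc_eq_integral_Ioo,
        ofReal_integral_eq_lintegral_ofReal hinteg hnn]
    have htie : P (⋃ (j : Fin (n+1)) (k : Fin (n+1)) (_ : j ≠ k),
        {x : Fin (n+1) → ℝ | x j = x k}) = 0 :=
      measure_iUnion_null fun j => measure_iUnion_null fun k =>
        measure_iUnion_null fun hjk => ties_null t j k hjk
    have hcover : good (n + 1) β ⊆ (⋃ j, M j) ∪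
        ⋃ (j : Fin (n+1)) (k : Fin (n+1)) (_ : j ≠ k), {x : Fin (n+1) → ℝ | x j = x k} := by
      intro x hx
      by_cases htx : ∀ j k, j ≠ k → x j ≠ x k
      · left
        obtain ⟨j, hj⟩ := Finite.exists_max x
        exact Set.mem_iUnion.mpr ⟨j, hx, fun k hk => lt_of_le_of_ne (hj k) (htx k j hk)⟩
      · right
        push_neg at htx
        obtain ⟨j, k, hjk, hxe⟩ := htx
        exact Set.mem_iUnion.mpr ⟨j, Set.mem_iUnion.mpr ⟨k, Set.mem_iUnion.mpr ⟨hjk, hxe⟩⟩⟩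
    have hdisj : Pairwise (Function.onFun Disjoint M) := by
      intro j j' hjj'
      refine Set.disjoint_left.mpr ?_
      rintro x ⟨-, h1⟩ ⟨-, h2⟩
      exact lt_irrefl (x j) (lt_trans (h2 j hjj') (h1 j' hjj'.symm))
    have hsum : P (good (n + 1) β) = ∑ j : Fin (n+1), P (M j) := by
      have h1 : P (good (n+1) β) ≤ P (⋃ j, M j) := by
        calc P (good (n+1) β) ≤ P ((⋃ j, M j) ∪ _) := measure_mono hcover
          _ ≤ P (⋃ j, M j) + P _ := measure_union_le _ _
          _ = P (⋃ j, M j) := by rw [htie, add_zero]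
      have h2 : P (⋃ j, M j) ≤ P (good (n+1) β) :=
        measure_mono (Set.iUnion_subset fun j => Set.inter_subset_left)
      rw [le_antisymm h1 h2, measure_iUnion hdisj hMm, tsum_fintype]
    rw [hsum, Finset.sum_congr rfl (fun j _ => hMj j), Finset.sum_const, Finset.card_univ,
      Fintype.card_fin]
    exact tail_calc n β a t hβ ha hat

theorem map_eq_pi {Ω : Type*} [MeasurableSpace Ω] (μ : Measure Ω) [IsProbabilityMeasure μ]
    (m : ℕ) (q : Fin m → Ω → ℝ) (hmeas : ∀ i, Measurable (q i))
    (hindep : ProbabilityTheory.iIndepFun q μ)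
    (hunif : ∀ i, μ.map (q i) = volume.restrict (Set.Icc (0 : ℝ) 1)) :
    μ.map (fun ω (j : Fin m) => q j ω) = Measure.pi (fun _ : Fin m => unif 1) := by
  have hqm : Measurable (fun ω (j : Fin m) => q j ω) := measurable_pi_lambda _ hmeas
  have huni : volume.restrict (Set.Icc (0:ℝ) 1) = unif 1 := by
    rw [unif]
    exact Measure.restrict_congr_set Ico_ae_eq_Icc.symm
  refine (Measure.pi_eq fun s hs => ?_).symm
  rw [Measure.map_apply hqm (MeasurableSet.univ_pi hs)]
  have hpre : (fun ω (j : Fin m) => q j ω) ⁻¹' (Set.pi Set.univ s)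
      = ⋂ i ∈ Finset.univ, q i ⁻¹' s i := by
    ext ω
    simp [Set.mem_pi]
  rw [hpre,
    (ProbabilityTheory.iIndepFun_iff_measure_inter_preimage_eq_mul.mp hindep)
      Finset.univ (fun i _ => hs i)]
  refine Finset.prod_congr rfl fun i _ => ?_
  rw [← Measure.map_apply (hmeas i) (hs i), hunif i, huni]

end SimesAux

open SimesAux

/-- Simes' test is exactly valid for `m` i.i.d. Uniform[0,1] p-values: the Simes
statistic `min_i (m/i)·q_(i)` (where `q_(1) ≤ ⋯ ≤ q_(m)` are the order statistics,
obtained here by sorting the vector of p-values) is itself Uniform[0,1]. -/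
theorem stmt6 {Ω : Type*} [MeasurableSpace Ω] (μ : Measure Ω) [IsProbabilityMeasure μ]
    (m : ℕ) (hm : 0 < m) (q : Fin m → Ω → ℝ) (hmeas : ∀ i, Measurable (q i))
    (hindep : iIndepFun q μ)
    (hunif : ∀ i, μ.map (q i) = volume.restrict (Set.Icc (0 : ℝ) 1)) :
    ∀ α ∈ Set.Icc (0 : ℝ) 1,
      μ {ω | Finset.univ.inf'
          (@Finset.univ_nonempty (Fin m) _ (Fin.pos_iff_nonempty.mp hm))
          (fun i : Fin m =>
            ((m : ℝ) / ((i : ℕ) + 1)) * (fun j => q j ω) (Tuple.sort (fun j => q j ω) i))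
        ≤ α} = ENNReal.ofReal α := by
  intro α hα
  obtain ⟨hα0, hα1⟩ := hα
  set β : ℝ := α / m with hβdef
  have hm0 : (0:ℝ) < m := Nat.cast_pos.mpr hm
  have hβ0 : 0 ≤ β := div_nonneg hα0 (le_of_lt hm0)
  have hmβ : (m:ℝ) * β = α := by
    rw [hβdef]
    field_simp
  set S : Set (Fin m → ℝ) :=
    {x | ∃ i : Fin m, (i : ℕ) + 1 ≤ cnt (((i:ℕ)+1) * β) x} with hS
  have hSm : MeasurableSet S := by
    have : S = ⋃ i : Fin m, {x | (i : ℕ) + 1 ≤ cnt (((i:ℕ)+1) * β) x} := by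
      ext x; simp [hS]
    rw [this]
    exact MeasurableSet.iUnion fun i => (measurable_cnt _) measurableSet_Ici
  have hqm : Measurable (fun ω (j : Fin m) => q j ω) := measurable_pi_lambda _ hmeas
  have hev : {ω | Finset.univ.inf'
          (@Finset.univ_nonempty (Fin m) _ (Fin.pos_iff_nonempty.mp hm))
          (fun i : Fin m =>
            ((m : ℝ) / ((i : ℕ) + 1)) * (fun j => q j ω) (Tuple.sort (fun j => q j ω) i))
        ≤ α} = (fun ω (j : Fin m) => q j ω) ⁻¹' S := by
    ext ω
    simp only [Set.mem_setOf_eq, Set.mem_preimage, hS, Finset.inf'_le_iff, Finset.mem_univ,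
      true_and]
    refine exists_congr fun i => ?_
    have hipos : (0:ℝ) < (i:ℕ)+1 := by positivity
    rw [mul_comm, ← le_div_iff₀ (div_pos hm0 hipos), div_div_eq_mul_div,
      show α * ((i:ℕ)+1) / (m:ℝ) = ((i:ℕ)+1) * β from by rw [hβdef]; ring]
    exact sorted_le_iff (fun j => q j ω) i _
  rw [hev, ← Measure.map_apply hqm hSm,
    map_eq_pi μ m q hmeas hindep hunif]
  haveI : IsProbabilityMeasure (unif 1) := unif_one_prob
  have hSc : S = (good m β)ᶜ := by
    ext x
    simp only [hS, Set.mem_setOf_eq, Set.mem_compl_iff, good, not_forall, not_le]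
    exact exists_congr fun i => by omega
  have hkey := key m β 1 hβ0 one_pos (by rw [hmβ]; exact hα1)
  rw [hSc, measure_compl (measurableSet_good m β) (measure_ne_top _ _), measure_univ, hkey,
    one_pow, one_pow, mul_one, hmβ]
  rw [← ENNReal.ofReal_one, ← ENNReal.ofReal_sub _ (by linarith : (0:ℝ) ≤ 1 - α)]
  norm_num
end

section
/- The empirical-CDF p-value with the +1 correction is valid: let T(X_1), ..., T(X_n), T(X_{n+1}) be exchangeable real random variables (e.g., i.i.d.), and define the p-value of X_{n+1} as q = (1 + ∑_{i=1}^n 1[T(X_i) ≥ T(X_{n+1})]) / (n+1). Then P(q ≤ α) ≤ α for every α ∈ [0,1]. -/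
open MeasureTheory
open scoped ENNReal

/-- Validity of the +1-corrected empirical (conformal) p-value: if the scores
`s 0, …, s n` (calibration scores and test score `s (Fin.last n)`) are exchangeable,
then `q = (1 + #{i ≤ n : s i ≥ s_{n+1}})/(n+1)` satisfies `P(q ≤ α) ≤ α`. -/
theorem stmt11 {Ω : Type*} [MeasurableSpace Ω] (μ : Measure Ω) [IsProbabilityMeasure μ]
    (n : ℕ) (s : Fin (n + 1) → Ω → ℝ) (hmeas : ∀ i, Measurable (s i))
    (hexch : ∀ π : Equiv.Perm (Fin (n + 1)),
      μ.map (fun ω => fun i => s (π i) ω) = μ.map (fun ω => fun i => s i ω))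
    (q : Ω → ℝ)
    (hq : ∀ ω, q ω =
      (1 + ((Finset.univ.filter
        (fun i : Fin n => s i.castSucc ω ≥ s (Fin.last n) ω)).card : ℝ)) / (n + 1)) :
    ∀ α ∈ Set.Icc (0 : ℝ) 1, μ {ω | q ω ≤ α} ≤ ENNReal.ofReal α := by
  intro α hα
  obtain ⟨hα0, hα1⟩ := hα
  classical
  set k : ℕ := ⌊α * (n + 1)⌋₊ with hk
  set vec : Ω → (Fin (n + 1) → ℝ) := fun ω i => s i ω with hvec
  have hvecm : Measurable vec := measurable_pi_lambda _ hmeas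
  set B : Fin (n + 1) → Set (Fin (n + 1) → ℝ) :=
    fun j => {v | ((Finset.univ.filter (fun i => v i ≥ v j)).card) ≤ k} with hB
  have hBm : ∀ j, MeasurableSet (B j) := by
    intro j
    have hcard : Measurable fun v : Fin (n + 1) → ℝ =>
        ((Finset.univ.filter (fun i => v i ≥ v j)).card) := by
      simp only [Finset.card_filter]
      apply Finset.measurable_sum
      intro i _
      exact Measurable.ite
        (measurableSet_le (measurable_pi_apply j) (measurable_pi_apply i))
        measurable_const measurable_const
    have : B j = (fun v : Fin (n + 1) → ℝ =>
        ((Finset.univ.filter (fun i => v i ≥ v j)).card)) ⁻¹' {m | m ≤ k} := rfl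
    rw [this]
    exact hcard trivial
  -- the event {q ≤ α} is vec ⁻¹' B (last n)
  have hset : {ω | q ω ≤ α} = vec ⁻¹' B (Fin.last n) := by
    ext ω
    set c : ℕ := (Finset.univ.filter
        (fun i : Fin n => s i.castSucc ω ≥ s (Fin.last n) ω)).card with hc
    have hcardfull : (Finset.univ.filter
        (fun i : Fin (n + 1) => s i ω ≥ s (Fin.last n) ω)).card = c + 1 := by
      rw [Finset.card_filter, Fin.sum_univ_castSucc,
        if_pos (le_refl (s (Fin.last n) ω)), hc, Finset.card_filter]
    have hnp : (0 : ℝ) < n + 1 := by positivity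
    constructor
    · intro h
      simp only [Set.mem_setOf_eq, hq ω] at h
      simp only [Set.mem_preimage, hB, Set.mem_setOf_eq, hvec, hcardfull]
      rw [div_le_iff₀ hnp] at h
      have : ((c + 1 : ℕ) : ℝ) ≤ α * (n + 1) := by push_cast; linarith
      exact Nat.le_floor this
    · intro h
      simp only [Set.mem_preimage, hB, Set.mem_setOf_eq, hvec, hcardfull] at h
      simp only [Set.mem_setOf_eq, hq ω]
      rw [div_le_iff₀ hnp]
      have := (Nat.le_floor_iff (by positivity)).mp h
      push_cast at this
      linarith
  -- exchangeability: all marginal events have the same probability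
  have hmap : ∀ j, μ (vec ⁻¹' B j) = μ (vec ⁻¹' B (Fin.last n)) := by
    intro j
    set π := Equiv.swap j (Fin.last n) with hπ
    have hπm : Measurable (fun ω => fun i => s (π i) ω) :=
      measurable_pi_lambda _ (fun i => hmeas (π i))
    have h2 : μ.map (fun ω => fun i => s (π i) ω) (B (Fin.last n))
        = μ.map vec (B (Fin.last n)) := by rw [hexch π]
    rw [Measure.map_apply hπm (hBm _), Measure.map_apply hvecm (hBm _)] at h2
    rw [← h2]
    congr 1
    ext ω
    have hπl : π (Fin.last n) = j := Equiv.swap_apply_right _ _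
    simp only [Set.mem_preimage, hB, Set.mem_setOf_eq, hvec, hπl]
    have hcardeq : (Finset.univ.filter (fun i => s (π i) ω ≥ s j ω)).card
        = (Finset.univ.filter (fun i => s i ω ≥ s j ω)).card := by
      apply Finset.card_bij (fun i _ => π i)
      · intro a ha
        simp only [Finset.mem_filter, Finset.mem_univ, true_and] at ha ⊢
        exact ha
      · intro a _ b _ h
        exact π.injective h
      · intro b hb
        refine ⟨π.symm b, ?_, by simp⟩
        simp only [Finset.mem_filter, Finset.mem_univ, true_and] at hb ⊢
        simpa using hb
    rw [hcardeq]
  -- pointwise combinatorial bound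
  have hsum_le : ∀ ω,
      (Finset.univ.filter (fun j : Fin (n + 1) => ω ∈ vec ⁻¹' B j)).card ≤ k := by
    intro ω
    by_cases hne :
        (Finset.univ.filter (fun j : Fin (n + 1) => ω ∈ vec ⁻¹' B j)).Nonempty
    · obtain ⟨j₀, hj₀mem, hj₀min⟩ :=
        Finset.exists_min_image _ (fun j => s j ω) hne
      have hj₀ : (Finset.univ.filter (fun i => s i ω ≥ s j₀ ω)).card ≤ k := by
        have := (Finset.mem_filter.mp hj₀mem).2
        simpa [hB, hvec] using this
      calc (Finset.univ.filter (fun j : Fin (n + 1) => ω ∈ vec ⁻¹' B j)).card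
          ≤ (Finset.univ.filter (fun i => s i ω ≥ s j₀ ω)).card := by
            apply Finset.card_le_card
            intro j hj
            simp only [Finset.mem_filter, Finset.mem_univ, true_and]
            exact hj₀min j hj
        _ ≤ k := hj₀
    · rw [Finset.not_nonempty_iff_eq_empty] at hne
      rw [hne, Finset.card_empty]
      exact Nat.zero_le k
  -- sum the measures
  have key : ((n : ℝ≥0∞) + 1) * μ (vec ⁻¹' B (Fin.last n)) ≤ (k : ℝ≥0∞) := by
    have h1 : ∑ j : Fin (n + 1), μ (vec ⁻¹' B j)
        = ((n : ℝ≥0∞) + 1) * μ (vec ⁻¹' B (Fin.last n)) := by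
      rw [Finset.sum_congr rfl (fun j _ => hmap j), Finset.sum_const]
      simp [nsmul_eq_mul]
    rw [← h1]
    have h2 : ∑ j : Fin (n + 1), μ (vec ⁻¹' B j)
        = ∫⁻ ω, ∑ j : Fin (n + 1), (vec ⁻¹' B j).indicator 1 ω ∂μ := by
      rw [lintegral_finset_sum _
        (fun j _ => measurable_one.indicator (hvecm (hBm j)))]
      exact Finset.sum_congr rfl fun j _ =>
        (lintegral_indicator_one (hvecm (hBm j))).symm
    rw [h2]
    calc ∫⁻ ω, ∑ j : Fin (n + 1), (vec ⁻¹' B j).indicator 1 ω ∂μ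
        ≤ ∫⁻ _, (k : ℝ≥0∞) ∂μ := by
          apply lintegral_mono
          intro ω
          have heq : ∑ j : Fin (n + 1), (vec ⁻¹' B j).indicator (1 : Ω → ℝ≥0∞) ω
              = ((Finset.univ.filter
                  (fun j : Fin (n + 1) => ω ∈ vec ⁻¹' B j)).card : ℝ≥0∞) := by
            simp only [Set.indicator_apply, Pi.one_apply]
            rw [Finset.card_filter]
            push_cast
            rfl
          exact le_trans (le_of_eq heq) (Nat.cast_le.mpr (hsum_le ω))
      _ = (k : ℝ≥0∞) := by simp
  -- conclude
  rw [hset]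
  have hne0 : ((n : ℝ≥0∞) + 1) ≠ 0 := by simp
  have hnetop : ((n : ℝ≥0∞) + 1) ≠ ⊤ := by
    simp [ENNReal.add_ne_top]
  have h3 : μ (vec ⁻¹' B (Fin.last n)) ≤ (k : ℝ≥0∞) / ((n : ℝ≥0∞) + 1) :=
    (ENNReal.le_div_iff_mul_le (Or.inl hne0) (Or.inl hnetop)).mpr
      (by rwa [mul_comm] at key)
  have hkle : (k : ℝ≥0∞) ≤ ENNReal.ofReal α * ((n : ℝ≥0∞) + 1) := by
    have hkr : (k : ℝ) ≤ α * (n + 1) := Nat.floor_le (by positivity)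
    calc (k : ℝ≥0∞) = ENNReal.ofReal (k : ℝ) := (ENNReal.ofReal_natCast k).symm
      _ ≤ ENNReal.ofReal (α * (n + 1)) := ENNReal.ofReal_le_ofReal hkr
      _ = ENNReal.ofReal α * ENNReal.ofReal ((n : ℝ) + 1) := ENNReal.ofReal_mul hα0
      _ = ENNReal.ofReal α * ((n : ℝ≥0∞) + 1) := by
          congr 1
          rw [ENNReal.ofReal_add (by positivity) zero_le_one]
          simp [ENNReal.ofReal_natCast]
  exact h3.trans (ENNReal.div_le_of_le_mul hkle)
end
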